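/- Let γ_A be a probability density on ℝ^{Nd} whose N one-body marginals all equal a probability density μ_A on ℝ^d (with μ_A > 0 a.e.), and let μ_B be a probability density on ℝ^d. Define γ_{B,A} as in the smoothing construction and Pγ_A(x_1,…,x_N) = ∫…∫ ∏_{i=1}^N (γ_{B,A}(x_i,x_i')/μ_A(x_i')) γ_A(x_1',…,x_N') dx_1'…dx_N'. Then Pγ_A is a probability density on ℝ^{Nd} and each of its N one-body marginals equals μ_B. -/

import Mathlib

open MeasureTheory ENNReal Set ProbabilityTheory

/-- The kernel `x' ↦ γ_{B,A}(·, x')/μ_A(x')`, where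
`γ_{B,A}(x,x') = f(x)δ_x(x') + f_B(x) f_A(x')/∫f_B` with `f = min(μ_A,μ_B)`,
`f_A = (μ_A − f)₊`, `f_B = (μ_B − f)₊`. -/
noncomputable def coupleKernel (d : ℕ) (μA μB : (Fin d → ℝ) → ℝ) (x' : Fin d → ℝ) :
    Measure (Fin d → ℝ) :=
  ENNReal.ofReal (min (μA x') (μB x') / μA x') • Measure.dirac x' +
    volume.withDensity (fun x => ENNReal.ofReal
      (max (μA x' - min (μA x') (μB x')) 0 /
          (μA x' * ∫ y, max (μB y - min (μA y) (μB y)) 0) *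
        max (μB x - min (μA x) (μB x)) 0))

/-- The operator `P`: `Pγ_A(x_1,…,x_N) = ∫ ∏ᵢ (γ_{B,A}(x_i,x_i')/μ_A(x_i')) γ_A(x') dx'`. -/
noncomputable def smoothP (N d : ℕ) (μA μB : (Fin d → ℝ) → ℝ)
    (ν : Measure (Fin N → Fin d → ℝ)) : Measure (Fin N → Fin d → ℝ) :=
  ν.bind (fun x' => Measure.pi (fun i => coupleKernel d μA μB (x' i)))


namespace SmoothAux


variable {α : Type*} [MeasurableSpace α]

theorem lintegral_pi_prod {n : ℕ} (μ : Fin n → Measure α) [∀ i, SigmaFinite (μ i)]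
    (f : Fin n → α → ℝ≥0∞) (hf : ∀ i, Measurable (f i)) :
    ∫⁻ x, ∏ i, f i (x i) ∂(Measure.pi μ) = ∏ i, ∫⁻ t, f i t ∂(μ i) := by
  induction n with
  | zero => simp [lintegral_const, Measure.pi_empty_univ]
  | succ n ih =>
      have h1 := ((measurePreserving_piFinSuccAbove μ 0).symm)
      calc
        ∫⁻ x, ∏ i, f i (x i) ∂(Measure.pi μ)
            = ∫⁻ y : α × (Fin n → α),
              f 0 y.1 * ∏ i : Fin n, f (Fin.succ i) (y.2 i)
              ∂((μ 0).prod (Measure.pi fun j => μ (Fin.succAbove 0 j))) := by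
          rw [← h1.lintegral_comp_emb (MeasurableEquiv.measurableEmbedding _)]
          simp_rw [MeasurableEquiv.piFinSuccAbove_symm_apply, Fin.insertNthEquiv,
            Fin.prod_univ_succ, Fin.insertNth_zero, Equiv.coe_fn_mk, Fin.cons_succ,
            Fin.zero_succAbove, Fin.cons_zero, cast_eq]
        _ = (∫⁻ t, f 0 t ∂(μ 0)) * ∏ i : Fin n, ∫⁻ t, f (Fin.succ i) t ∂(μ (Fin.succ i)) := by
          have h2 := lintegral_prod_mul (μ := μ 0)
            (ν := Measure.pi fun j => μ (Fin.succAbove 0 j)) (f := f 0)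
            (g := fun z : Fin n → α => ∏ i : Fin n, f (Fin.succ i) (z i))
            (hf 0).aemeasurable
            (Finset.measurable_prod _ fun i _ =>
              (hf _).comp (measurable_pi_apply i)).aemeasurable
          rw [h2, ih (fun j => μ (Fin.succAbove 0 j)) (fun j => f (Fin.succ j)) (fun j => hf _)]
          simp [Fin.zero_succAbove]
        _ = ∏ i, ∫⁻ t, f i t ∂(μ i) := by rw [Fin.prod_univ_succ]

theorem pi_withDensity {n : ℕ} (ν : Fin n → Measure α) [∀ i, SigmaFinite (ν i)]
    (f : Fin n → α → ℝ≥0∞) (hf : ∀ i, Measurable (f i))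
    [∀ i, SigmaFinite ((ν i).withDensity (f i))] :
    Measure.pi (fun i => (ν i).withDensity (f i)) =
      (Measure.pi ν).withDensity (fun x => ∏ i, f i (x i)) := by
  refine Measure.pi_eq (fun s hs => ?_)
  rw [withDensity_apply _ (MeasurableSet.univ_pi hs),
    ← lintegral_indicator (MeasurableSet.univ_pi hs)]
  have key : ∀ x : Fin n → α, (univ.pi s).indicator (fun x => ∏ i, f i (x i)) x
      = ∏ i, (s i).indicator (f i) (x i) := by
    intro x
    by_cases hx : x ∈ univ.pi s
    · rw [indicator_of_mem hx]
      exact Finset.prod_congr rfl fun i _ => (indicator_of_mem (hx i (mem_univ i)) _).symm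
    · rw [indicator_of_notMem hx]
      rw [mem_univ_pi] at hx
      push_neg at hx
      obtain ⟨i, hi⟩ := hx
      exact (Finset.prod_eq_zero (Finset.mem_univ i) (indicator_of_notMem hi _)).symm
  simp_rw [key]
  rw [lintegral_pi_prod ν _ (fun i => (hf i).indicator (hs i))]
  exact Finset.prod_congr rfl fun i _ => by
    rw [lintegral_indicator (hs i), ← withDensity_apply _ (hs i)]

theorem pi_absolutelyContinuous {n : ℕ} (μ ν : Fin n → Measure α)
    [∀ i, SigmaFinite (μ i)] [∀ i, SigmaFinite (ν i)]
    (h : ∀ i, μ i ≪ ν i) : Measure.pi μ ≪ Measure.pi ν := by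
  have h1 : ∀ i, (ν i).withDensity ((μ i).rnDeriv (ν i)) = μ i :=
    fun i => Measure.withDensity_rnDeriv_eq _ _ (h i)
  haveI : ∀ i, SigmaFinite ((ν i).withDensity ((μ i).rnDeriv (ν i))) := by
    intro i; rw [h1 i]; infer_instance
  have h2 : Measure.pi μ = Measure.pi (fun i => (ν i).withDensity ((μ i).rnDeriv (ν i))) := by
    congr 1; funext i; rw [h1 i]
  rw [h2, pi_withDensity ν _ (fun i => Measure.measurable_rnDeriv _ _)]
  exact withDensity_absolutelyContinuous _ _

theorem measurable_pi_of_kernel {n : ℕ} (κ : α → Measure α) (hκ : Measurable κ)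
    (hfin : ∀ y, IsFiniteMeasure (κ y)) {s : Set (Fin n → α)} (hs : MeasurableSet s) :
    Measurable (fun x' : Fin n → α => Measure.pi (fun i => κ (x' i)) s) := by
  haveI : ∀ (x' : Fin n → α) (i : Fin n), SigmaFinite (κ (x' i)) :=
    fun x' i => (hfin (x' i)).toSigmaFinite
  haveI hPfin : ∀ (x' : Fin n → α), IsFiniteMeasure (Measure.pi (fun i => κ (x' i))) :=
    fun x' => inferInstance
  have hbox : ∀ (t : Fin n → Set α), (∀ i, MeasurableSet (t i)) →
      Measurable (fun x' : Fin n → α => Measure.pi (fun i => κ (x' i)) (univ.pi t)) := by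
    intro t ht
    have heq : ∀ x' : Fin n → α, Measure.pi (fun i => κ (x' i)) (univ.pi t)
        = ∏ i, κ (x' i) (t i) := fun x' => Measure.pi_pi (fun i => κ (x' i)) t
    simp_rw [heq]
    exact Finset.measurable_prod _ fun i _ =>
      (Measure.measurable_coe (ht i)).comp (hκ.comp (measurable_pi_apply i))
  have huniv : Measurable (fun x' : Fin n → α => Measure.pi (fun i => κ (x' i)) univ) := by
    have := hbox (fun _ => univ) (fun _ => MeasurableSet.univ)
    simpa using this
  have key : ∀ ⦃t : Set (Fin n → α)⦄, MeasurableSet t →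
      Measurable (fun x' : Fin n → α => Measure.pi (fun i => κ (x' i)) t) := by
    refine MeasurableSpace.induction_on_inter generateFrom_pi.symm isPiSystem_pi ?_ ?_ ?_ ?_
    · simp
    · rintro t ⟨t', ht', rfl⟩
      exact hbox t' fun i => ht' i (mem_univ i)
    · intro t ht hmeas
      have heq : ∀ x' : Fin n → α, Measure.pi (fun i => κ (x' i)) tᶜ
          = Measure.pi (fun i => κ (x' i)) univ - Measure.pi (fun i => κ (x' i)) t :=
        fun x' => measure_compl ht (measure_ne_top _ _)
      simp_rw [heq]
      exact huniv.sub hmeas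
    · intro g hdisj hgm hgmeas
      have heq : ∀ x' : Fin n → α, Measure.pi (fun i' => κ (x' i')) (⋃ i, g i)
          = ∑' i, Measure.pi (fun i' => κ (x' i')) (g i) :=
        fun x' => measure_iUnion hdisj hgm
      simp_rw [heq]
      exact Measurable.ennreal_tsum hgmeas
  exact key hs

theorem measurable_dirac_add (μ0 : Measure α) :
    Measurable (fun y : α => Measure.dirac y + μ0) := by
  refine Measure.measurable_of_measurable_coe _ (fun s hs => ?_)
  simp_rw [Measure.add_apply, Measure.dirac_apply' _ hs]
  exact (measurable_one.indicator hs).add_const _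

theorem bind_pi_dirac {n : ℕ} (m μ0 : Measure α) [IsProbabilityMeasure m]
    [IsFiniteMeasure μ0] :
    (Measure.pi (fun _ : Fin n => m)).bind
        (fun x' => Measure.pi (fun i => Measure.dirac (x' i) + μ0)) =
      Measure.pi (fun _ : Fin n => m + μ0) := by
  haveI : ∀ y : α, IsFiniteMeasure (Measure.dirac y + μ0) := fun y => inferInstance
  have hκm : Measurable (fun y : α => Measure.dirac y + μ0) := measurable_dirac_add μ0
  have hΦ : Measurable (fun x' : Fin n → α => Measure.pi (fun i => Measure.dirac (x' i) + μ0)) :=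
    Measure.measurable_of_measurable_coe _ (fun s hs =>
      measurable_pi_of_kernel _ hκm (fun y => inferInstance) hs)
  symm
  refine Measure.pi_eq (fun s hs => ?_)
  rw [Measure.bind_apply (MeasurableSet.univ_pi hs) hΦ.aemeasurable]
  have heq : ∀ x' : Fin n → α, Measure.pi (fun i => Measure.dirac (x' i) + μ0) (univ.pi s)
      = ∏ i, ((s i).indicator (1 : α → ℝ≥0∞) (x' i) + μ0 (s i)) := by
    intro x'
    rw [Measure.pi_pi]
    exact Finset.prod_congr rfl fun i _ => by
      rw [Measure.add_apply, Measure.dirac_apply' _ (hs i)]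
  simp_rw [heq]
  rw [lintegral_pi_prod _ _ (fun i => (measurable_one.indicator (hs i)).add_const _)]
  refine Finset.prod_congr rfl fun i _ => ?_
  rw [lintegral_add_right _ measurable_const, lintegral_indicator_one (hs i),
    lintegral_const, measure_univ, mul_one, Measure.add_apply]

theorem volume_ac_gaussian :
    (volume : Measure ℝ) ≪ gaussianReal 0 1 ∧ gaussianReal 0 1 ≪ (volume : Measure ℝ) := by
  rw [gaussianReal_of_var_ne_zero 0 one_ne_zero]
  constructor
  · have h := withDensity_inv_same (μ := (volume : Measure ℝ)) (measurable_gaussianPDF 0 1)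
      (Filter.Eventually.of_forall fun x => (gaussianPDF_pos 0 one_ne_zero x).ne')
      (Filter.Eventually.of_forall fun x => by simp [gaussianPDF_def])
    conv_lhs => rw [← h]
    exact withDensity_absolutelyContinuous _ _
  · exact withDensity_absolutelyContinuous _ _

variable {d : ℕ}

noncomputable def gA (μA μB : (Fin d → ℝ) → ℝ) (x : Fin d → ℝ) : ℝ :=
  max (μA x - min (μA x) (μB x)) 0

noncomputable def gB (μA μB : (Fin d → ℝ) → ℝ) (x : Fin d → ℝ) : ℝ :=
  max (μB x - min (μA x) (μB x)) 0

noncomputable def cI (μA μB : (Fin d → ℝ) → ℝ) : ℝ := ∫ y, gB μA μB y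

noncomputable def lamB (μA μB : (Fin d → ℝ) → ℝ) : Measure (Fin d → ℝ) :=
  volume.withDensity fun x => ENNReal.ofReal (gB μA μB x)

variable {μA μB : (Fin d → ℝ) → ℝ}

lemma gA_nonneg (x) : 0 ≤ gA μA μB x := le_max_right _ _
lemma gB_nonneg (x) : 0 ≤ gB μA μB x := le_max_right _ _
lemma cI_nonneg : 0 ≤ cI μA μB := integral_nonneg gB_nonneg

lemma gA_meas (hμAm : Measurable μA) (hμBm : Measurable μB) : Measurable (gA μA μB) :=
  (hμAm.sub (hμAm.min hμBm)).max measurable_const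

lemma gB_meas (hμAm : Measurable μA) (hμBm : Measurable μB) : Measurable (gB μA μB) :=
  (hμBm.sub (hμAm.min hμBm)).max measurable_const

lemma coupleKernel_eq (hμAm : Measurable μA) (hμBm : Measurable μB) (y : Fin d → ℝ) :
    coupleKernel d μA μB y =
      ENNReal.ofReal (min (μA y) (μB y) / μA y) • Measure.dirac y +
        ENNReal.ofReal (gA μA μB y / (μA y * cI μA μB)) • lamB μA μB := by
  have hfun : (fun x => ENNReal.ofReal
      (max (μA y - min (μA y) (μB y)) 0 /
          (μA y * ∫ t, max (μB t - min (μA t) (μB t)) 0) *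
        max (μB x - min (μA x) (μB x)) 0)) =
      (ENNReal.ofReal (gA μA μB y / (μA y * cI μA μB)) •
        fun x => ENNReal.ofReal (gB μA μB x)) := by
    funext x
    simp only [Pi.smul_apply, smul_eq_mul, gA, gB, cI]
    rw [← ENNReal.ofReal_mul' (le_max_right _ _)]
  rw [coupleKernel, hfun, withDensity_smul _ ((gB_meas hμAm hμBm).ennreal_ofReal), lamB]

lemma lamB_univ (hi : Integrable (gB μA μB)) :
    lamB μA μB univ = ENNReal.ofReal (cI μA μB) := by
  rw [lamB, withDensity_apply _ MeasurableSet.univ, Measure.restrict_univ,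
    ← ofReal_integral_eq_lintegral_ofReal hi (Filter.Eventually.of_forall gB_nonneg)]
  rfl

lemma lamB_finite (hi : Integrable (gB μA μB)) : IsFiniteMeasure (lamB μA μB) :=
  ⟨by rw [lamB_univ hi]; exact ofReal_lt_top⟩

lemma coupleKernel_univ (hμAm : Measurable μA) (hμBm : Measurable μB)
    (hi : Integrable (gB μA μB)) (y : Fin d → ℝ) :
    coupleKernel d μA μB y univ =
      ENNReal.ofReal (min (μA y) (μB y) / μA y) +
        ENNReal.ofReal (gA μA μB y / (μA y * cI μA μB)) * ENNReal.ofReal (cI μA μB) := by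
  rw [coupleKernel_eq hμAm hμBm, Measure.add_apply, Measure.smul_apply, Measure.smul_apply,
    lamB_univ hi, smul_eq_mul, smul_eq_mul]
  simp

lemma coupleKernel_finite (hμAm : Measurable μA) (hμBm : Measurable μB)
    (hi : Integrable (gB μA μB)) (y : Fin d → ℝ) :
    IsFiniteMeasure (coupleKernel d μA μB y) := by
  constructor
  rw [coupleKernel_univ hμAm hμBm hi y]
  exact ENNReal.add_lt_top.2 ⟨ofReal_lt_top, ENNReal.mul_lt_top ofReal_lt_top ofReal_lt_top⟩

lemma coupleKernel_meas (hμAm : Measurable μA) (hμBm : Measurable μB) :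
    Measurable (coupleKernel d μA μB) := by
  refine Measure.measurable_of_measurable_coe _ (fun s hs => ?_)
  have heq : ∀ y, coupleKernel d μA μB y s =
      ENNReal.ofReal (min (μA y) (μB y) / μA y) * s.indicator 1 y +
        ENNReal.ofReal (gA μA μB y / (μA y * cI μA μB)) * lamB μA μB s := by
    intro y
    rw [coupleKernel_eq hμAm hμBm, Measure.add_apply, Measure.smul_apply, Measure.smul_apply,
      smul_eq_mul, smul_eq_mul, Measure.dirac_apply' _ hs]
  simp_rw [heq]
  exact ((((hμAm.min hμBm).div hμAm).ennreal_ofReal.mul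
      (measurable_one.indicator hs)).add
    (((gA_meas hμAm hμBm).div (hμAm.mul_const _)).ennreal_ofReal.mul_const _))

lemma coupleKernel_ac (hμAm : Measurable μA) (hμBm : Measurable μB) (y : Fin d → ℝ) :
    coupleKernel d μA μB y ≪ Measure.dirac y + lamB μA μB := by
  rw [coupleKernel_eq hμAm hμBm]
  intro s h0
  rw [Measure.add_apply, add_eq_zero] at h0
  simp [Measure.add_apply, Measure.smul_apply, h0.1, h0.2]


lemma min_integrable (hμAm : Measurable μA) (hμBm : Measurable μB)
    (hμAi : Integrable μA) (hμBi : Integrable μB) : Integrable (fun x => min (μA x) (μB x)) := by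
  refine (hμAi.abs.add hμBi.abs).mono' (hμAm.min hμBm).aestronglyMeasurable ?_
  refine Filter.Eventually.of_forall fun x => ?_
  rw [Real.norm_eq_abs]
  rcases le_total (μA x) (μB x) with h | h
  · rw [min_eq_left h]; exact le_add_of_nonneg_right (abs_nonneg _)
  · rw [min_eq_right h]; exact le_add_of_nonneg_left (abs_nonneg _)

lemma gA_eq (y : Fin d → ℝ) : gA μA μB y = μA y - min (μA y) (μB y) :=
  max_eq_left (sub_nonneg.2 (min_le_left _ _))

lemma gB_eq (y : Fin d → ℝ) : gB μA μB y = μB y - min (μA y) (μB y) :=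
  max_eq_left (sub_nonneg.2 (min_le_right _ _))

lemma gA_integrable (hμAm : Measurable μA) (hμBm : Measurable μB)
    (hμAi : Integrable μA) (hμBi : Integrable μB) : Integrable (gA μA μB) := by
  have : gA μA μB = fun y => μA y - min (μA y) (μB y) := funext gA_eq
  rw [this]; exact hμAi.sub (min_integrable hμAm hμBm hμAi hμBi)

lemma gB_integrable (hμAm : Measurable μA) (hμBm : Measurable μB)
    (hμAi : Integrable μA) (hμBi : Integrable μB) : Integrable (gB μA μB) := by
  have : gB μA μB = fun y => μB y - min (μA y) (μB y) := funext gB_eq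
  rw [this]; exact hμBi.sub (min_integrable hμAm hμBm hμAi hμBi)

lemma int_gA_eq_cI (hμAm : Measurable μA) (hμBm : Measurable μB)
    (hμAi : Integrable μA) (hμBi : Integrable μB)
    (hA1 : ∫ x, μA x = 1) (hB1 : ∫ x, μB x = 1) : ∫ x, gA μA μB x = cI μA μB := by
  have h1 : ∫ x, gA μA μB x = (∫ x, μA x) - ∫ x, min (μA x) (μB x) := by
    simp_rw [gA_eq]
    exact integral_sub hμAi (min_integrable hμAm hμBm hμAi hμBi)
  have h2 : cI μA μB = (∫ x, μB x) - ∫ x, min (μA x) (μB x) := by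
    rw [cI]
    simp_rw [gB_eq]
    exact integral_sub hμBi (min_integrable hμAm hμBm hμAi hμBi)
  rw [h1, h2, hA1, hB1]

lemma mass_one (hμAm : Measurable μA) (hμBm : Measurable μB)
    (hμA0 : ∀ᵐ x, 0 < μA x) (hμB0 : ∀ x, 0 ≤ μB x)
    (hμAi : Integrable μA) (hμBi : Integrable μB)
    (hA1 : ∫ x, μA x = 1) (hB1 : ∫ x, μB x = 1) :
    ∀ᵐ y, coupleKernel d μA μB y univ = 1 := by
  have hgBi := gB_integrable hμAm hμBm hμAi hμBi
  by_cases hc : cI μA μB = 0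
  · have hgA0 : gA μA μB =ᵐ[volume] 0 := by
      refine (integral_eq_zero_iff_of_nonneg gA_nonneg
        (gA_integrable hμAm hμBm hμAi hμBi)).1 ?_
      rw [int_gA_eq_cI hμAm hμBm hμAi hμBi hA1 hB1, hc]
    filter_upwards [hμA0, hgA0] with y hy hgy
    simp only [Pi.zero_apply] at hgy
    rw [coupleKernel_univ hμAm hμBm hgBi y, hc]
    have h3 : min (μA y) (μB y) = μA y := by
      have := gA_eq (μA := μA) (μB := μB) y
      rw [hgy] at this
      linarith [this]
    rw [h3, div_self hy.ne']
    simp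
  · filter_upwards [hμA0] with y hy
    rw [coupleKernel_univ hμAm hμBm hgBi y,
      ← ENNReal.ofReal_mul' cI_nonneg]
    have h4 : gA μA μB y / (μA y * cI μA μB) * cI μA μB = gA μA μB y / μA y := by
      field_simp
    rw [h4, ← ENNReal.ofReal_add (div_nonneg (le_min hy.le (hμB0 y)) hy.le)
      (div_nonneg (gA_nonneg y) hy.le), ← add_div, gA_eq, add_sub_cancel,
      div_self hy.ne', ENNReal.ofReal_one]

lemma bind_kernel_eq (hμAm : Measurable μA) (hμBm : Measurable μB)
    (hμA0 : ∀ᵐ x, 0 < μA x) (hμB0 : ∀ x, 0 ≤ μB x)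
    (hμAi : Integrable μA) (hμBi : Integrable μB)
    (hA1 : ∫ x, μA x = 1) (hB1 : ∫ x, μB x = 1) {s : Set (Fin d → ℝ)} (hs : MeasurableSet s) :
    ∫⁻ y, coupleKernel d μA μB y s ∂(volume.withDensity fun t => ENNReal.ofReal (μA t)) =
      (volume.withDensity fun t => ENNReal.ofReal (μB t)) s := by
  have hgBi := gB_integrable hμAm hμBm hμAi hμBi
  have hκs : Measurable (fun y => coupleKernel d μA μB y s) :=
    (Measure.measurable_coe hs).comp (coupleKernel_meas hμAm hμBm)
  rw [lintegral_withDensity_eq_lintegral_mul _ hμAm.ennreal_ofReal hκs]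
  simp only [Pi.mul_apply]
  have hae : (fun y => (ENNReal.ofReal (μA y) * coupleKernel d μA μB y s))
      =ᵐ[volume] fun y =>
        s.indicator (fun t => ENNReal.ofReal (min (μA t) (μB t))) y +
          ENNReal.ofReal (gA μA μB y / cI μA μB) * lamB μA μB s := by
    filter_upwards [hμA0] with y hy
    rw [coupleKernel_eq hμAm hμBm, Measure.add_apply, Measure.smul_apply, Measure.smul_apply,
      smul_eq_mul, smul_eq_mul, Measure.dirac_apply' _ hs, mul_add, ← mul_assoc, ← mul_assoc,
      ← ENNReal.ofReal_mul hy.le, ← ENNReal.ofReal_mul hy.le]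
    have e1 : μA y * (min (μA y) (μB y) / μA y) = min (μA y) (μB y) := by field_simp
    have e2 : μA y * (gA μA μB y / (μA y * cI μA μB)) = gA μA μB y / cI μA μB := by
      rcases eq_or_ne (cI μA μB) 0 with h | h
      · simp [h]
      · field_simp
    rw [e1, e2]
    congr 1
    by_cases hys : y ∈ s
    · simp [indicator_of_mem hys]
    · simp [indicator_of_notMem hys]
  rw [lintegral_congr_ae hae,
    lintegral_add_left ((hμAm.min hμBm).ennreal_ofReal.indicator hs),
    lintegral_indicator hs,
    lintegral_mul_const _ ((gA_meas hμAm hμBm).div_const _).ennreal_ofReal,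
    withDensity_apply _ hs]
  by_cases hc : cI μA μB = 0
  · have hlam0 : lamB μA μB s = 0 := by
      refine measure_mono_null (subset_univ s) ?_
      rw [lamB_univ hgBi, hc, ENNReal.ofReal_zero]
    rw [hlam0, mul_zero, add_zero]
    have hgB0 : gB μA μB =ᵐ[volume] 0 := by
      refine (integral_eq_zero_iff_of_nonneg gB_nonneg hgBi).1 ?_
      rw [← cI]; exact hc
    refine lintegral_congr_ae (ae_restrict_of_ae ?_)
    filter_upwards [hgB0] with t ht
    have := gB_eq (μA := μA) (μB := μB) t
    rw [ht] at this
    have hmin : min (μA t) (μB t) = μB t := by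
      simp only [Pi.zero_apply] at this
      linarith
    rw [hmin]
  · have hone : ∫⁻ y, ENNReal.ofReal (gA μA μB y / cI μA μB) = 1 := by
      rw [← ofReal_integral_eq_lintegral_ofReal
        ((gA_integrable hμAm hμBm hμAi hμBi).div_const _)
        (Filter.Eventually.of_forall fun y => div_nonneg (gA_nonneg y) cI_nonneg),
        integral_div, int_gA_eq_cI hμAm hμBm hμAi hμBi hA1 hB1, div_self hc,
        ENNReal.ofReal_one]
    rw [hone, one_mul, lamB, withDensity_apply _ hs,
      ← lintegral_add_left ((hμAm.min hμBm).ennreal_ofReal)]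
    refine lintegral_congr_ae (ae_restrict_of_ae ?_)
    filter_upwards [hμA0] with t ht
    rw [← ENNReal.ofReal_add (le_min ht.le (hμB0 t)) (gB_nonneg t), gB_eq, add_sub_cancel]

end SmoothAux

/-- If all one-body marginals of the probability density `γ_A` equal `μ_A` (with `μ_A > 0`
a.e.) and `μ_B` is a probability density, then `Pγ_A` is a probability density on `ℝ^{Nd}`
all of whose one-body marginals equal `μ_B`. -/
theorem smoothP_marginals (N d : ℕ) (hN : 1 ≤ N)
    (γA : (Fin N → Fin d → ℝ) → ℝ) (μA μB : (Fin d → ℝ) → ℝ)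
    (hγAm : Measurable γA) (hγA0 : ∀ x, 0 ≤ γA x) (hγA1 : ∫ x, γA x = 1)
    (hμAm : Measurable μA) (hμA0 : ∀ᵐ x, 0 < μA x)
    (hμBm : Measurable μB) (hμB0 : ∀ x, 0 ≤ μB x) (hμB1 : ∫ x, μB x = 1)
    (hmarg : ∀ i : Fin N,
      (volume.withDensity (fun x => ENNReal.ofReal (γA x))).map (fun x => x i) =
        volume.withDensity (fun t => ENNReal.ofReal (μA t))) :
    IsProbabilityMeasure
        (smoothP N d μA μB (volume.withDensity (fun x => ENNReal.ofReal (γA x)))) ∧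
      (∀ i : Fin N,
        (smoothP N d μA μB (volume.withDensity (fun x => ENNReal.ofReal (γA x)))).map
            (fun x => x i) =
          volume.withDensity (fun t => ENNReal.ofReal (μB t))) ∧
      ∃ ρ : (Fin N → Fin d → ℝ) → ℝ, Measurable ρ ∧ (∀ x, 0 ≤ ρ x) ∧
        smoothP N d μA μB (volume.withDensity (fun x => ENNReal.ofReal (γA x))) =
          volume.withDensity (fun x => ENNReal.ofReal (ρ x)) := by
  classical
  set ν : Measure (Fin N → Fin d → ℝ) :=
    volume.withDensity (fun x => ENNReal.ofReal (γA x)) with hν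
  have hγAi : Integrable γA := by
    by_contra h
    rw [integral_undef h] at hγA1
    exact one_ne_zero hγA1.symm
  haveI hνprob : IsProbabilityMeasure ν := by
    constructor
    rw [hν, withDensity_apply _ MeasurableSet.univ, Measure.restrict_univ,
      ← ofReal_integral_eq_lintegral_ofReal hγAi (Filter.Eventually.of_forall hγA0), hγA1,
      ENNReal.ofReal_one]
  have hμBi : Integrable μB := by
    by_contra h
    rw [integral_undef h] at hμB1
    exact one_ne_zero hμB1.symm
  have hμA_mass : ∫⁻ t, ENNReal.ofReal (μA t) = 1 := by
    have h0 := congrArg (fun m : Measure (Fin d → ℝ) => m Set.univ) (hmarg ⟨0, hN⟩)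
    rw [Measure.map_apply (measurable_pi_apply _) MeasurableSet.univ, Set.preimage_univ,
      measure_univ, withDensity_apply _ MeasurableSet.univ, Measure.restrict_univ] at h0
    exact h0.symm
  have hμAi : Integrable μA := by
    refine ⟨hμAm.aestronglyMeasurable, ?_⟩
    rw [hasFiniteIntegral_iff_ofReal (hμA0.mono fun x h => h.le), hμA_mass]
    exact ENNReal.one_lt_top
  have hμA1 : ∫ t, μA t = 1 := by
    rw [integral_eq_lintegral_of_nonneg_ae (hμA0.mono fun x h => h.le)
      hμAm.aestronglyMeasurable, hμA_mass]
    simp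
  have hgBi := SmoothAux.gB_integrable hμAm hμBm hμAi hμBi
  haveI hκfin : ∀ y, IsFiniteMeasure (coupleKernel d μA μB y) :=
    SmoothAux.coupleKernel_finite hμAm hμBm hgBi
  haveI hκsig : ∀ y, SigmaFinite (coupleKernel d μA μB y) := fun y => (hκfin y).toSigmaFinite
  have hκm := SmoothAux.coupleKernel_meas hμAm hμBm
  have hΦ : Measurable
      (fun x' : Fin N → Fin d → ℝ => Measure.pi fun i => coupleKernel d μA μB (x' i)) :=
    Measure.measurable_of_measurable_coe _ fun s hs =>
      SmoothAux.measurable_pi_of_kernel _ hκm hκfin hs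
  have hmass := SmoothAux.mass_one hμAm hμBm hμA0 hμB0 hμAi hμBi hμA1 hμB1
  have hmassm : Measurable (fun y => coupleKernel d μA μB y Set.univ) :=
    (Measure.measurable_coe MeasurableSet.univ).comp hκm
  have hbadm : MeasurableSet {y : Fin d → ℝ | ¬ coupleKernel d μA μB y Set.univ = 1} :=
    (hmassm (measurableSet_singleton 1)).compl
  have hbad0 : volume {y : Fin d → ℝ | ¬ coupleKernel d μA μB y Set.univ = 1} = 0 :=
    ae_iff.1 hmass
  have hae_mass : ∀ᵐ x' ∂ν, ∀ i, coupleKernel d μA μB (x' i) Set.univ = 1 := by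
    rw [ae_all_iff]
    intro i
    rw [ae_iff]
    have hpre : {x' : Fin N → Fin d → ℝ | ¬ coupleKernel d μA μB (x' i) Set.univ = 1}
        = (fun x' : Fin N → Fin d → ℝ => x' i) ⁻¹'
            {y | ¬ coupleKernel d μA μB y Set.univ = 1} := rfl
    rw [hpre, ← Measure.map_apply (measurable_pi_apply i) hbadm, hmarg i]
    exact withDensity_absolutelyContinuous volume _ hbad0
  have hP1 : IsProbabilityMeasure (smoothP N d μA μB ν) := by
    constructor
    rw [smoothP, Measure.bind_apply MeasurableSet.univ hΦ.aemeasurable]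
    have hone : ∫⁻ x', Measure.pi (fun i => coupleKernel d μA μB (x' i)) Set.univ ∂ν
        = ∫⁻ _, 1 ∂ν := by
      refine lintegral_congr_ae (hae_mass.mono fun x' hx' => ?_)
      show (Measure.pi fun i => coupleKernel d μA μB (x' i)) Set.univ = 1
      rw [Measure.pi_univ]
      exact Finset.prod_eq_one fun i _ => hx' i
    rw [hone, lintegral_one, measure_univ]
  refine ⟨hP1, ?_, ?_⟩
  · intro i
    refine Measure.ext fun s hs => ?_
    rw [Measure.map_apply (measurable_pi_apply i) hs, smoothP,
      Measure.bind_apply (hs.preimage (measurable_pi_apply i)) hΦ.aemeasurable]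
    have hpre : (fun x : Fin N → Fin d → ℝ => x i) ⁻¹' s
        = Set.univ.pi (fun j => if j = i then s else Set.univ) := by
      ext x
      simp only [Set.mem_preimage, Set.mem_univ_pi]
      constructor
      · intro hx j
        by_cases hj : j = i
        · subst hj; simpa using hx
        · simp [hj]
      · intro h
        have := h i
        simpa using this
    have hΦpre : ∀ x' : Fin N → Fin d → ℝ,
        Measure.pi (fun j => coupleKernel d μA μB (x' j)) ((fun x => x i) ⁻¹' s)
          = coupleKernel d μA μB (x' i) s *
              ∏ j ∈ Finset.univ.erase i, coupleKernel d μA μB (x' j) Set.univ := by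
      intro x'
      rw [hpre, Measure.pi_pi, ← Finset.mul_prod_erase Finset.univ _ (Finset.mem_univ i)]
      congr 1
      · rw [if_pos rfl]
      · exact Finset.prod_congr rfl fun j hj => by rw [if_neg (Finset.ne_of_mem_erase hj)]
    simp_rw [hΦpre]
    have hsimp : ∫⁻ x', coupleKernel d μA μB (x' i) s *
          ∏ j ∈ Finset.univ.erase i, coupleKernel d μA μB (x' j) Set.univ ∂ν
        = ∫⁻ x', coupleKernel d μA μB (x' i) s ∂ν := by
      refine lintegral_congr_ae (hae_mass.mono fun x' hx' => ?_)
      show coupleKernel d μA μB (x' i) s *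
          ∏ j ∈ Finset.univ.erase i, coupleKernel d μA μB (x' j) Set.univ
        = coupleKernel d μA μB (x' i) s
      rw [Finset.prod_eq_one fun j _ => hx' j, mul_one]
    have hlm := lintegral_map (μ := ν) (f := fun y => coupleKernel d μA μB y s)
      (g := fun x' : Fin N → Fin d → ℝ => x' i)
      ((Measure.measurable_coe hs).comp hκm) (measurable_pi_apply i)
    rw [hmarg i] at hlm
    rw [hsimp, ← hlm]
    exact SmoothAux.bind_kernel_eq hμAm hμBm hμA0 hμB0 hμAi hμBi hμA1 hμB1 hs
  · haveI hlamfin : IsFiniteMeasure (SmoothAux.lamB μA μB) := SmoothAux.lamB_finite hgBi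
    have hlam_vol : SmoothAux.lamB μA μB ≪ (volume : Measure (Fin d → ℝ)) := by
      rw [SmoothAux.lamB]
      exact withDensity_absolutelyContinuous _ _
    have hG1 : IsProbabilityMeasure (gaussianReal 0 1) := inferInstance
    set Gd : Measure (Fin d → ℝ) := Measure.pi (fun _ : Fin d => gaussianReal 0 1) with hGd
    haveI : IsProbabilityMeasure Gd := by rw [hGd]; infer_instance
    set Gn : Measure (Fin N → Fin d → ℝ) := Measure.pi (fun _ : Fin N => Gd) with hGn
    haveI : IsProbabilityMeasure Gn := by rw [hGn]; infer_instance
    have hvolE_Gd : (volume : Measure (Fin d → ℝ)) ≪ Gd := by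
      rw [hGd]
      conv_lhs => rw [volume_pi]
      exact SmoothAux.pi_absolutelyContinuous _ _ fun _ => SmoothAux.volume_ac_gaussian.1
    have hGd_vol : Gd ≪ (volume : Measure (Fin d → ℝ)) := by
      rw [hGd]
      conv_rhs => rw [volume_pi]
      exact SmoothAux.pi_absolutelyContinuous _ _ fun _ => SmoothAux.volume_ac_gaussian.2
    have hvolX_Gn : (volume : Measure (Fin N → Fin d → ℝ)) ≪ Gn := by
      rw [hGn]
      conv_lhs => rw [volume_pi]
      exact SmoothAux.pi_absolutelyContinuous _ _ fun _ => hvolE_Gd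
    have hν_Gn : ν ≪ Gn := (withDensity_absolutelyContinuous _ _).trans hvolX_Gn
    have hGdlam_vol : Gd + SmoothAux.lamB μA μB ≪ (volume : Measure (Fin d → ℝ)) := by
      intro s h0
      rw [Measure.add_apply, hGd_vol h0, hlam_vol h0, add_zero]
    have hac : smoothP N d μA μB ν ≪ volume := by
      refine Measure.AbsolutelyContinuous.mk fun s hs hs0 => ?_
      rw [smoothP, Measure.bind_apply hs hΦ.aemeasurable]
      haveI hηfin : ∀ y : Fin d → ℝ, IsFiniteMeasure (Measure.dirac y + SmoothAux.lamB μA μB) :=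
        fun y => inferInstance
      have hηs_meas := SmoothAux.measurable_pi_of_kernel (n := N)
        (fun y => Measure.dirac y + SmoothAux.lamB μA μB)
        (SmoothAux.measurable_dirac_add _) hηfin hs
      have hGn_int : ∫⁻ x',
          Measure.pi (fun i => Measure.dirac (x' i) + SmoothAux.lamB μA μB) s ∂Gn = 0 := by
        have hb := SmoothAux.bind_pi_dirac (n := N) Gd (SmoothAux.lamB μA μB)
        have hbs := congrArg (fun m : Measure (Fin N → Fin d → ℝ) => m s) hb
        rw [Measure.bind_apply hs (Measure.measurable_of_measurable_coe _ fun t ht =>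
          SmoothAux.measurable_pi_of_kernel _ (SmoothAux.measurable_dirac_add _) hηfin ht).aemeasurable] at hbs
        rw [← hGn] at hbs
        rw [hbs]
        refine SmoothAux.pi_absolutelyContinuous
          (fun _ : Fin N => Gd + SmoothAux.lamB μA μB) (fun _ => volume)
          (fun _ => hGdlam_vol) ?_
        rwa [← volume_pi]
      have hGn_ae : ∀ᵐ x' ∂Gn,
          Measure.pi (fun i => Measure.dirac (x' i) + SmoothAux.lamB μA μB) s = 0 :=
        (lintegral_eq_zero_iff hηs_meas).1 hGn_int
      have hν_ae : ∀ᵐ x' ∂ν,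
          Measure.pi (fun i => Measure.dirac (x' i) + SmoothAux.lamB μA μB) s = 0 :=
        hGn_ae.filter_mono hν_Gn.ae_le
      have hκ_ae : (fun x' => Measure.pi (fun i => coupleKernel d μA μB (x' i)) s)
          =ᵐ[ν] fun _ => 0 := by
        filter_upwards [hν_ae] with x' hx'
        exact SmoothAux.pi_absolutelyContinuous _ _
          (fun i => SmoothAux.coupleKernel_ac hμAm hμBm (x' i)) hx'
      rw [lintegral_congr_ae hκ_ae]
      simp
    haveI hPfin : IsFiniteMeasure (smoothP N d μA μB ν) := by haveI := hP1; infer_instance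
    refine ⟨fun x => ((smoothP N d μA μB ν).rnDeriv volume x).toReal,
      (Measure.measurable_rnDeriv _ _).ennreal_toReal, fun x => ENNReal.toReal_nonneg, ?_⟩
    have h1 : (fun x => ENNReal.ofReal (((smoothP N d μA μB ν).rnDeriv volume x).toReal))
        =ᵐ[volume] (smoothP N d μA μB ν).rnDeriv volume := by
      filter_upwards [Measure.rnDeriv_lt_top (smoothP N d μA μB ν) volume] with x hx
      rw [ENNReal.ofReal_toReal hx.ne]
    rw [withDensity_congr_ae h1, Measure.withDensity_rnDeriv_eq _ _ hac]
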